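/- For X ≥ 1, we have ∑_{n ≤ X} d(n)/n = (1/2)log²(X) + 2γ·log(X) + θ·(2·(16/3) + 2γ - 1) for some real θ with |θ| ≤ 1. -/

import Mathlib

open Finset Real

private lemma harmonic_real (m : ℕ) :
    (harmonic m : ℝ) = ∑ e ∈ Finset.Icc 1 m, ((e : ℝ))⁻¹ := by
  induction m with
  | zero => simp
  | succ n ih =>
    rw [harmonic_succ, Finset.sum_Icc_succ_top (by omega), ← ih]
    push_cast; ring

private lemma harmonic_bounds {m : ℕ} (hm : 1 ≤ m) :
    Real.log m + Real.eulerMascheroniConstant < (harmonic m : ℝ) ∧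
    (harmonic m : ℝ) < Real.log (m + 1) + Real.eulerMascheroniConstant := by
  constructor
  · have h := Real.eulerMascheroniConstant_lt_eulerMascheroniSeq' m
    rw [Real.eulerMascheroniSeq', if_neg (by omega)] at h
    linarith
  · have h := Real.eulerMascheroniSeq_lt_eulerMascheroniConstant m
    rw [Real.eulerMascheroniSeq] at h
    linarith

-- log(x+1) - log x ∈ [1/(x+1), 1/x] for x ≥ 1 (indeed x > 0)
private lemma log_step {x : ℝ} (hx : 0 < x) :
    1/(x+1) ≤ Real.log (x+1) - Real.log x ∧ Real.log (x+1) - Real.log x ≤ 1/x := by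
  have h1 : Real.log (x+1) - Real.log x = Real.log ((x+1)/x) := by
    rw [Real.log_div (by linarith) (by linarith)]
  have h2 : Real.log ((x+1)/x) ≤ (x+1)/x - 1 :=
    Real.log_le_sub_one_of_pos (by positivity)
  have h3 : Real.log (x/(x+1)) ≤ x/(x+1) - 1 :=
    Real.log_le_sub_one_of_pos (by positivity)
  have h4 : Real.log (x/(x+1)) = -(Real.log (x+1) - Real.log x) := by
    rw [Real.log_div (by linarith) (by linarith)]; ring
  constructor
  · rw [h4] at h3
    have : x/(x+1) - 1 = -(1/(x+1)) := by field_simp; ring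
    rw [this] at h3; linarith
  · rw [h1]
    have : (x+1)/x - 1 = 1/x := by field_simp; ring
    linarith [h2.trans_eq this]

private lemma harmonic_floor_est {t : ℝ} (ht : 1 ≤ t) :
    |(harmonic ⌊t⌋₊ : ℝ) - (Real.log t + Real.eulerMascheroniConstant)| ≤ 2 / t := by
  set m := ⌊t⌋₊ with hm
  have hm1 : 1 ≤ m := Nat.le_floor (by exact_mod_cast ht)
  have hmpos : (0:ℝ) < m := by exact_mod_cast hm1
  have hmt : (m:ℝ) ≤ t := Nat.floor_le (by linarith)
  have htm : t < m + 1 := Nat.lt_floor_add_one t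
  obtain ⟨hb1, hb2⟩ := harmonic_bounds hm1
  obtain ⟨hs1, hs2⟩ := log_step hmpos
  have hl1 : Real.log (m:ℝ) ≤ Real.log t := Real.log_le_log (by positivity) hmt
  have hl2 : Real.log t ≤ Real.log ((m:ℝ)+1) := Real.log_le_log (by linarith) (by linarith)
  have hm1' : (1:ℝ) ≤ m := by exact_mod_cast hm1
  have h2t : 1/(m:ℝ) ≤ 2/t := by
    rw [div_le_div_iff₀ hmpos (by linarith)]; linarith
  rw [abs_le]
  constructor <;> push_cast at * <;> [linarith; linarith]

private lemma card_antidiag (n : ℕ) (hn : n ≠ 0) :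
    n.divisorsAntidiagonal.card = n.divisors.card := by
  rw [← Nat.image_fst_divisorsAntidiagonal]
  refine (Finset.card_image_of_injOn ?_).symm
  intro p hp q hq hpq
  rw [Finset.mem_coe, Nat.mem_divisorsAntidiagonal] at hp hq
  have h1 : p.1 ≠ 0 := by rintro h; rw [h, zero_mul] at hp; exact hp.2 hp.1.symm
  have h2 : p.2 = q.2 := by
    refine Nat.eq_of_mul_eq_mul_left (Nat.pos_of_ne_zero h1) ?_
    rw [hp.1, hpq, hq.1]
  exact Prod.ext hpq h2

private lemma div_card_eq (n : ℕ) (hn : 1 ≤ n) :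
    (n.divisors.card : ℝ) / n = ∑ p ∈ n.divisorsAntidiagonal, ((p.1 : ℝ) * p.2)⁻¹ := by
  have h : ∀ p ∈ n.divisorsAntidiagonal, ((p.1 : ℝ) * p.2)⁻¹ = (n : ℝ)⁻¹ := by
    intro p hp
    rw [Nat.mem_divisorsAntidiagonal] at hp
    rw [← hp.1]; push_cast; ring
  rw [Finset.sum_congr rfl h, Finset.sum_const, card_antidiag n (by omega),
    nsmul_eq_mul, div_eq_mul_inv]

private lemma swap_sum (N : ℕ) :
    ∑ n ∈ Finset.Icc 1 N, ((n.divisors.card : ℝ)) / n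
      = ∑ d ∈ Finset.Icc 1 N, ∑ e ∈ Finset.Icc 1 (N / d), ((d : ℝ) * e)⁻¹ := by
  have h1 : ∀ n ∈ Finset.Icc 1 N, ((n.divisors.card : ℝ)) / n
      = ∑ p ∈ n.divisorsAntidiagonal, ((p.1 : ℝ) * p.2)⁻¹ := fun n hn =>
    div_card_eq n (Finset.mem_Icc.mp hn).1
  rw [Finset.sum_congr rfl h1]
  have e1 : ∑ n ∈ Finset.Icc 1 N, ∑ p ∈ n.divisorsAntidiagonal, ((p.1 : ℝ) * p.2)⁻¹
      = ∑ x ∈ (Finset.Icc 1 N).sigma (fun n => n.divisorsAntidiagonal),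
          ((x.2.1 : ℝ) * x.2.2)⁻¹ :=
    (Finset.sum_sigma (Finset.Icc 1 N) (fun n => n.divisorsAntidiagonal)
      (fun x => ((x.2.1 : ℝ) * x.2.2)⁻¹)).symm
  have e2 : ∑ d ∈ Finset.Icc 1 N, ∑ e ∈ Finset.Icc 1 (N / d), ((d : ℝ) * e)⁻¹
      = ∑ y ∈ (Finset.Icc 1 N).sigma (fun d => Finset.Icc 1 (N / d)),
          ((y.1 : ℝ) * y.2)⁻¹ :=
    (Finset.sum_sigma (Finset.Icc 1 N) (fun d => Finset.Icc 1 (N / d))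
      (fun y => ((y.1 : ℝ) * y.2)⁻¹)).symm
  rw [e1, e2]
  refine Finset.sum_nbij' (fun x => ⟨x.2.1, x.2.2⟩) (fun y => ⟨y.1 * y.2, (y.1, y.2)⟩)
    ?_ ?_ ?_ ?_ ?_
  · rintro ⟨n, p⟩ hx
    simp only [Finset.mem_sigma, Finset.mem_Icc, Nat.mem_divisorsAntidiagonal] at hx ⊢
    obtain ⟨⟨hn1, hn2⟩, hpq, hne⟩ := hx
    have hp1 : 1 ≤ p.1 := by rcases Nat.eq_zero_or_pos p.1 with h | h; · simp [h] at hpq; omega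
                             · exact h
    have hp2 : 1 ≤ p.2 := by rcases Nat.eq_zero_or_pos p.2 with h | h; · simp [h] at hpq; omega
                             · exact h
    refine ⟨⟨hp1, ?_⟩, hp2, ?_⟩
    · calc p.1 ≤ p.1 * p.2 := Nat.le_mul_of_pos_right _ hp2
        _ ≤ N := by omega
    · rw [Nat.le_div_iff_mul_le (by omega)]
      calc p.2 * p.1 = p.1 * p.2 := by ring
        _ ≤ N := by omega
  · rintro ⟨d, e⟩ hy
    simp only [Finset.mem_sigma, Finset.mem_Icc] at hy
    obtain ⟨⟨hd1, hd2⟩, he1, he2⟩ := hy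
    rw [Nat.le_div_iff_mul_le (by omega)] at he2
    have hm1 : 0 < d * e := Nat.mul_pos (by omega) (by omega)
    have hm2 : d * e ≤ N := by rw [mul_comm]; exact he2
    exact Finset.mem_sigma.mpr ⟨Finset.mem_Icc.mpr ⟨hm1, hm2⟩,
      Nat.mem_divisorsAntidiagonal.mpr ⟨rfl, Nat.pos_iff_ne_zero.mp hm1⟩⟩
  · rintro ⟨n, p⟩ hx
    simp only [Finset.mem_sigma, Nat.mem_divisorsAntidiagonal] at hx
    obtain ⟨_, hpq, _⟩ := hx
    simp [hpq]
  · rintro ⟨d, e⟩ _; rfl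
  · rintro ⟨n, p⟩ _; rfl


private lemma step_upper {x : ℝ} (hx : 1 ≤ x) :
    Real.log (x+1)^2/2 - Real.log x^2/2 ≤ Real.log x * (1/x) + (1/x)^2/2 := by
  obtain ⟨h1, h2⟩ := log_step (by linarith : (0:ℝ) < x)
  have hl : 0 ≤ Real.log x := Real.log_nonneg hx
  have hx0 : 0 < x := by linarith
  have hw : 0 < 1/(x+1) := by positivity
  have e : Real.log (x+1) = Real.log x + (Real.log (x+1) - Real.log x) := by ring
  rw [e]
  nlinarith [mul_nonneg (sub_nonneg.mpr h2) hl,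
    mul_nonneg (sub_nonneg.mpr h2) (by linarith : (0:ℝ) ≤ 1/x + (Real.log (x+1) - Real.log x))]

private lemma step_lower {x : ℝ} (hx : 1 ≤ x) :
    0 ≤ Real.log (x+1)^2/2 - Real.log x^2/2
        - Real.log (x+1) * (1/(x+1)) + (1/x)*(1/(x+1)) := by
  obtain ⟨h1, h2⟩ := log_step (by linarith : (0:ℝ) < x)
  have hl : 0 ≤ Real.log x := Real.log_nonneg hx
  have hw : 0 < 1/(x+1) := by positivity
  have e : Real.log (x+1) = Real.log x + (Real.log (x+1) - Real.log x) := by ring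
  rw [e]
  nlinarith [mul_nonneg hl (sub_nonneg.mpr h1),
    mul_nonneg (le_of_lt hw) (sub_nonneg.mpr h2),
    sq_nonneg (Real.log (x+1) - Real.log x)]

private lemma L_upper (N : ℕ) (hN : 1 ≤ N) :
    ∑ d ∈ Finset.Icc 1 N, Real.log d / d
      ≤ Real.log ((N:ℝ)+1)^2/2 - Real.log ((N:ℝ)+1)/((N:ℝ)+1) + 1 - 1/((N:ℝ)+1) := by
  induction N with
  | zero => omega
  | succ n ih =>
    rcases Nat.eq_zero_or_pos n with rfl | hn
    · simp only [Nat.cast_one, Finset.Icc_self, Finset.sum_singleton]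
      norm_num [Real.log_one]
      nlinarith [sq_nonneg (Real.log 2 - 1/2), Real.log_nonneg (by norm_num : (1:ℝ) ≤ 2)]
    · have ih' := ih hn
      have hx : (1:ℝ) ≤ (n:ℝ) + 1 := by
        have : (1:ℝ) ≤ (n:ℝ) := by exact_mod_cast hn
        linarith
      have hs := step_lower hx
      have hx0 : (0:ℝ) < (n:ℝ) + 1 := by linarith
      have heq : (1/((n:ℝ)+1)) * (1/((n:ℝ)+1+1)) = 1/((n:ℝ)+1) - 1/((n:ℝ)+1+1) := by
        field_simp; ring
      have hdiv : Real.log ((n:ℝ)+1) * (1/((n:ℝ)+1)) = Real.log ((n:ℝ)+1) / ((n:ℝ)+1) := by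
        ring
      have hdiv2 : Real.log ((n:ℝ)+1+1) * (1/((n:ℝ)+1+1))
          = Real.log ((n:ℝ)+1+1) / ((n:ℝ)+1+1) := by ring
      rw [Finset.sum_Icc_succ_top (by omega)]
      push_cast
      linarith

private lemma L_lower (N : ℕ) (hN : 1 ≤ N) :
    Real.log ((N:ℝ)+1)^2/2 ≤ (∑ d ∈ Finset.Icc 1 N, Real.log d / d) + 1 - 1/(2*(N:ℝ)) := by
  induction N with
  | zero => omega
  | succ n ih =>
    rcases Nat.eq_zero_or_pos n with rfl | hn
    · simp only [Nat.cast_one, Finset.Icc_self, Finset.sum_singleton]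
      norm_num [Real.log_one]
      nlinarith [Real.log_nonneg (by norm_num : (1:ℝ) ≤ 2),
        Real.log_le_sub_one_of_pos (by norm_num : (0:ℝ) < 2)]
    · have ih' := ih hn
      have hn1 : (1:ℝ) ≤ (n:ℝ) := by exact_mod_cast hn
      have hx : (1:ℝ) ≤ (n:ℝ) + 1 := by linarith
      have hs := step_upper hx
      have hdiv : Real.log ((n:ℝ)+1) * (1/((n:ℝ)+1)) = Real.log ((n:ℝ)+1) / ((n:ℝ)+1) := by
        ring
      have key : (1/((n:ℝ)+1))^2/2 ≤ 1/(2*(n:ℝ)) - 1/(2*((n:ℝ)+1)) := by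
        have h : 1/(2*(n:ℝ)) - 1/(2*((n:ℝ)+1)) = 1/(2*(n:ℝ)*((n:ℝ)+1)) := by
          field_simp; ring
        have h2 : (1/((n:ℝ)+1))^2/2 = 1/(2*((n:ℝ)+1)^2) := by
          field_simp
        rw [h, h2]
        apply one_div_le_one_div_of_le (by positivity)
        nlinarith
      rw [Finset.sum_Icc_succ_top (by omega)]
      push_cast
      linarith
section
open Finset Real

private lemma L_est {X : ℝ} (hX : 1 ≤ X) :
    |(∑ d ∈ Finset.Icc 1 ⌊X⌋₊, Real.log d / d) - Real.log X ^ 2 / 2| ≤ 2 := by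
  set N := ⌊X⌋₊ with hNdef
  have hN1 : 1 ≤ N := Nat.le_floor (by exact_mod_cast hX)
  have hNX : (N:ℝ) ≤ X := Nat.floor_le (by linarith)
  have hXN : X < (N:ℝ) + 1 := Nat.lt_floor_add_one X
  have hNr : (1:ℝ) ≤ (N:ℝ) := by exact_mod_cast hN1
  have hNr0 : (0:ℝ) < (N:ℝ) := by linarith
  have hb0 : 0 ≤ Real.log X := Real.log_nonneg hX
  have hba : Real.log X ≤ Real.log ((N:ℝ)+1) :=
    Real.log_le_log (by linarith) (by linarith)
  have hNb : Real.log (N:ℝ) ≤ Real.log X := Real.log_le_log hNr0 hNX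
  obtain ⟨_, hstep⟩ := log_step hNr0
  have haN : Real.log ((N:ℝ)+1) ≤ (N:ℝ) := by
    have := Real.log_le_sub_one_of_pos (by linarith : (0:ℝ) < (N:ℝ)+1)
    linarith
  have hsq : Real.log ((N:ℝ)+1)^2/2 - Real.log X^2/2 ≤ 1 := by
    have hab : Real.log ((N:ℝ)+1) - Real.log X ≤ 1/(N:ℝ) := by linarith
    have hinv : (1/(N:ℝ)) * (N:ℝ) = 1 := by field_simp
    nlinarith [mul_le_mul_of_nonneg_right hab
      (by linarith : (0:ℝ) ≤ Real.log ((N:ℝ)+1) + Real.log X)]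
  have hup := L_upper N hN1
  have hlo := L_lower N hN1
  have h1 : 0 ≤ Real.log ((N:ℝ)+1)/((N:ℝ)+1) := div_nonneg (Real.log_nonneg (by linarith)) (by linarith)
  have h2 : 0 ≤ 1/((N:ℝ)+1) := by positivity
  have h3 : 0 ≤ 1/(2*(N:ℝ)) := by positivity
  rw [abs_le]
  constructor
  · nlinarith [sq_nonneg (Real.log ((N:ℝ)+1) - Real.log X)]
  · linarith

end

theorem sum_divisor_count_div (X : ℝ) (hX : 1 ≤ X) :
    ∃ θ : ℝ, |θ| ≤ 1 ∧
      ∑ n ∈ Finset.Icc 1 ⌊X⌋₊, (n.divisors.card : ℝ) / n =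
        (1 / 2) * Real.log X ^ 2 + 2 * Real.eulerMascheroniConstant * Real.log X
          + θ * (2 * (16 / 3) + 2 * Real.eulerMascheroniConstant - 1) := by
  have hX0 : (0:ℝ) < X := by linarith
  set γ := Real.eulerMascheroniConstant with hγdef
  have hγ1 : 1/2 < γ := Real.one_half_lt_eulerMascheroniConstant
  have hγ2 : γ < 2/3 := Real.eulerMascheroniConstant_lt_two_thirds
  set N := ⌊X⌋₊ with hNdef
  have hN1 : 1 ≤ N := Nat.le_floor (by exact_mod_cast hX)
  have hNX : (N:ℝ) ≤ X := Nat.floor_le (by linarith)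
  have hXN : X < (N:ℝ) + 1 := Nat.lt_floor_add_one X
  have hNr : (1:ℝ) ≤ (N:ℝ) := by exact_mod_cast hN1
  set lX := Real.log X with hlXdef
  have hlX0 : 0 ≤ lX := Real.log_nonneg hX
  have hlXle : lX ≤ X - 1 := Real.log_le_sub_one_of_pos hX0
  rw [swap_sum]
  have hinner : ∀ d ∈ Finset.Icc 1 N, (∑ e ∈ Finset.Icc 1 (N/d), ((d:ℝ)*e)⁻¹)
      = (d:ℝ)⁻¹ * (harmonic (N/d) : ℝ) := by
    intro d _
    rw [harmonic_real, Finset.mul_sum]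
    exact Finset.sum_congr rfl fun e _ => by rw [mul_inv]
  rw [Finset.sum_congr rfl hinner]
  set S := ∑ d ∈ Finset.Icc 1 N, (d:ℝ)⁻¹ * (harmonic (N/d) : ℝ) with hSdef
  set HN := (harmonic N : ℝ) with hHNdef
  set L := ∑ d ∈ Finset.Icc 1 N, Real.log d / (d:ℝ) with hLdef
  -- per-term estimate
  have hper : ∀ d ∈ Finset.Icc 1 N,
      |(d:ℝ)⁻¹ * (harmonic (N/d):ℝ) - ((lX + γ)*(d:ℝ)⁻¹ - Real.log d / d)| ≤ 2/X := by
    intro d hd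
    obtain ⟨hd1, hd2⟩ := Finset.mem_Icc.mp hd
    have hdr : (1:ℝ) ≤ (d:ℝ) := by exact_mod_cast hd1
    have hd0 : (0:ℝ) < (d:ℝ) := by linarith
    have hdN : (d:ℝ) ≤ (N:ℝ) := by exact_mod_cast hd2
    have ht : 1 ≤ X / d := (one_le_div hd0).mpr (by linarith)
    have hfl : ⌊X / (d:ℝ)⌋₊ = N / d := by rw [Nat.floor_div_natCast X d]
    have hest := harmonic_floor_est ht
    rw [hfl] at hest
    have hlog : Real.log (X / d) = lX - Real.log d :=
      Real.log_div (by linarith) (by linarith)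
    have e : (d:ℝ)⁻¹ * (harmonic (N/d):ℝ) - ((lX + γ)*(d:ℝ)⁻¹ - Real.log d / d)
        = (d:ℝ)⁻¹ * ((harmonic (N/d):ℝ) - (Real.log (X/d) + γ)) := by
      rw [hlog]; field_simp; ring
    have h2d : 2/(X/(d:ℝ)) = 2*(d:ℝ)/X := by
      rw [div_div_eq_mul_div]
    rw [e, abs_mul, abs_of_nonneg (by positivity : (0:ℝ) ≤ (d:ℝ)⁻¹)]
    calc (d:ℝ)⁻¹ * |(harmonic (N/d):ℝ) - (Real.log (X/d) + γ)|
        ≤ (d:ℝ)⁻¹ * (2*(d:ℝ)/X) := by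
          apply mul_le_mul_of_nonneg_left _ (by positivity)
          rw [← h2d]; exact hest
      _ = 2/X := by field_simp
  -- sum estimate
  have hmain : |S - ((lX + γ)*HN - L)| ≤ 2 := by
    have hsum : ∑ d ∈ Finset.Icc 1 N, ((lX + γ)*(d:ℝ)⁻¹ - Real.log d / d)
        = (lX + γ)*HN - L := by
      rw [Finset.sum_sub_distrib, ← Finset.mul_sum, hHNdef, harmonic_real]
    have h0 : S - ((lX + γ)*HN - L)
        = ∑ d ∈ Finset.Icc 1 N, ((d:ℝ)⁻¹ * (harmonic (N/d):ℝ)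
            - ((lX + γ)*(d:ℝ)⁻¹ - Real.log d / d)) := by
      rw [Finset.sum_sub_distrib, hsum]
    rw [h0]
    calc |∑ d ∈ Finset.Icc 1 N, ((d:ℝ)⁻¹ * (harmonic (N/d):ℝ)
            - ((lX + γ)*(d:ℝ)⁻¹ - Real.log d / d))|
        ≤ ∑ d ∈ Finset.Icc 1 N, |(d:ℝ)⁻¹ * (harmonic (N/d):ℝ)
            - ((lX + γ)*(d:ℝ)⁻¹ - Real.log d / d)| := Finset.abs_sum_le_sum_abs _ _
      _ ≤ ∑ _d ∈ Finset.Icc 1 N, 2/X := Finset.sum_le_sum hper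
      _ = (N:ℝ) * (2/X) := by
          rw [Finset.sum_const, Nat.card_Icc, nsmul_eq_mul]; norm_num
      _ ≤ X * (2/X) := by
          apply mul_le_mul_of_nonneg_right hNX (by positivity)
      _ = 2 := by field_simp
  have hδ : |HN - (lX + γ)| ≤ 2/X := harmonic_floor_est hX
  have hLest : |L - lX^2/2| ≤ 2 := L_est hX
  -- assemble
  set C := 2 * (16/3 : ℝ) + 2*γ - 1 with hCdef
  have hC : (32:ℝ)/3 ≤ C := by rw [hCdef]; linarith
  have hC0 : (0:ℝ) < C := lt_of_lt_of_le (by norm_num) hC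
  have hCne : C ≠ 0 := ne_of_gt hC0
  refine ⟨(S - ((1/2)*lX^2 + 2*γ*lX))/C, ?_, ?_⟩
  · rw [abs_div, div_le_one (by rwa [abs_of_pos hC0])]
    rw [abs_of_pos hC0]
    have h1 : S - ((1/2)*lX^2 + 2*γ*lX)
        = (S - ((lX+γ)*HN - L)) + (lX+γ)*(HN - (lX+γ)) + γ^2 + (lX^2/2 - L) := by ring
    have h2 : |(lX+γ)*(HN - (lX+γ))| ≤ 2 := by
      rw [abs_mul]
      have ha : |lX+γ| ≤ X := by
        rw [abs_of_nonneg (by linarith)]; linarith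
      calc |lX+γ| * |HN - (lX+γ)| ≤ X * (2/X) := by
            apply mul_le_mul ha hδ (abs_nonneg _) (by linarith)
        _ = 2 := by field_simp
    have h3 : γ^2 ≤ 4/9 := by nlinarith
    have h4 : |γ^2| = γ^2 := abs_of_nonneg (by positivity)
    rw [h1]
    calc |(S - ((lX+γ)*HN - L)) + (lX+γ)*(HN - (lX+γ)) + γ^2 + (lX^2/2 - L)|
        ≤ |(S - ((lX+γ)*HN - L)) + (lX+γ)*(HN - (lX+γ)) + γ^2| + |lX^2/2 - L| :=
          abs_add_le _ _
      _ ≤ |(S - ((lX+γ)*HN - L)) + (lX+γ)*(HN - (lX+γ))| + |γ^2| + |lX^2/2 - L| := by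
          linarith [abs_add_le ((S - ((lX+γ)*HN - L)) + (lX+γ)*(HN - (lX+γ))) (γ^2)]
      _ ≤ |S - ((lX+γ)*HN - L)| + |(lX+γ)*(HN - (lX+γ))| + |γ^2| + |lX^2/2 - L| := by
          linarith [abs_add_le (S - ((lX+γ)*HN - L)) ((lX+γ)*(HN - (lX+γ)))]
      _ ≤ 2 + 2 + 4/9 + 2 := by
          rw [h4]
          have := abs_sub_comm L (lX^2/2)
          linarith [hLest, (abs_sub_comm (lX^2/2) L ▸ hLest)]
      _ ≤ C := le_trans (by norm_num) hC
  · field_simp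
    ring
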